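/- arXiv:2304.09024 — 2 statements merged into one kernel-verified Lean document; each statement's English description precedes it below -/
import Mathlib

section
/- For probability density functions p and q on a measurable space, the quantity ∫ p·log(p/(p+q)) + ∫ q·log(q/(p+q)) equals -log 4 + 2·JSD(p‖q), where JSD is the Jensen–Shannon divergence; in particular it is at least -log 4, with equality iff p = q almost everywhere. -/
open MeasureTheory

/-- Jensen–Shannon divergence between two densities w.r.t. a common measure. -/
noncomputable def JSD {α : Type*} [MeasurableSpace α] (μ : Measure α) (p q : α → ℝ) : ℝ :=
  (1/2) * ∫ x, p x * Real.log (p x / ((p x + q x) / 2)) ∂μ +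
  (1/2) * ∫ x, q x * Real.log (q x / ((p x + q x) / 2)) ∂μ

lemma log_ge_one_sub_inv {x : ℝ} (hx : 0 < x) : 1 - 1/x ≤ Real.log x := by
  have h := Real.log_le_sub_one_of_pos (show (0:ℝ) < 1/x by positivity)
  rw [Real.log_div one_ne_zero hx.ne', Real.log_one] at h
  linarith

lemma log_gt_one_sub_inv {x : ℝ} (hx : 0 < x) (hne : x ≠ 1) : 1 - 1/x < Real.log x := by
  have hinv : (1:ℝ)/x ≠ 1 := by
    intro h; apply hne; field_simp at h; linarith
  have h := Real.log_lt_sub_one_of_pos (show (0:ℝ) < 1/x by positivity) hinv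
  rw [Real.log_div one_ne_zero hx.ne', Real.log_one] at h
  linarith

lemma split_log (a b : ℝ) (ha : 0 ≤ a) (hb : 0 ≤ b) :
    a * Real.log (a / ((a + b) / 2)) = a * Real.log (a / (a + b)) + a * Real.log 2 := by
  rcases eq_or_lt_of_le ha with h | h
  · simp [← h]
  · have hs : 0 < a + b := by linarith
    have h1 : a / ((a + b) / 2) = 2 * (a / (a + b)) := by field_simp
    rw [h1, Real.log_mul two_ne_zero (by positivity : (0:ℝ) < a / (a+b)).ne']
    ring

lemma key_pos (a b : ℝ) (hap : 0 < a) (hbp : 0 < b) :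
    0 ≤ a * Real.log (a / (a + b)) + b * Real.log (b / (a + b)) + (a + b) * Real.log 2 ∧
    (a * Real.log (a / (a + b)) + b * Real.log (b / (a + b)) + (a + b) * Real.log 2 = 0 ↔
      a = b) := by
  have hs : 0 < a + b := by linarith
  have e1 : a * Real.log (a / (a + b)) + a * Real.log 2 = a * Real.log (2 * a / (a + b)) := by
    have h1 : 2 * a / (a + b) = 2 * (a / (a + b)) := by ring
    rw [h1, Real.log_mul two_ne_zero (by positivity : (0:ℝ) < a / (a+b)).ne']; ring
  have e2 : b * Real.log (b / (a + b)) + b * Real.log 2 = b * Real.log (2 * b / (a + b)) := by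
    have h1 : 2 * b / (a + b) = 2 * (b / (a + b)) := by ring
    rw [h1, Real.log_mul two_ne_zero (by positivity : (0:ℝ) < b / (a+b)).ne']; ring
  have hrw : a * Real.log (a / (a + b)) + b * Real.log (b / (a + b)) + (a + b) * Real.log 2
      = a * Real.log (2 * a / (a + b)) + b * Real.log (2 * b / (a + b)) := by
    rw [← e1, ← e2]; ring
  have hxa : (0:ℝ) < 2 * a / (a + b) := by positivity
  have hxb : (0:ℝ) < 2 * b / (a + b) := by positivity
  have hia : 1 / (2 * a / (a + b)) = (a + b) / (2 * a) := by field_simp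
  have hib : 1 / (2 * b / (a + b)) = (a + b) / (2 * b) := by field_simp
  have ea : a * ((a + b) / (2 * a)) = (a + b) / 2 := by field_simp
  have eb : b * ((a + b) / (2 * b)) = (a + b) / 2 := by field_simp
  have l1 : a - (a + b) / 2 ≤ a * Real.log (2 * a / (a + b)) := by
    have h := log_ge_one_sub_inv hxa
    rw [hia] at h
    have h2 := mul_le_mul_of_nonneg_left h hap.le
    rw [mul_sub, mul_one, ea] at h2
    linarith
  have l2 : b - (a + b) / 2 ≤ b * Real.log (2 * b / (a + b)) := by
    have h := log_ge_one_sub_inv hxb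
    rw [hib] at h
    have h2 := mul_le_mul_of_nonneg_left h hbp.le
    rw [mul_sub, mul_one, eb] at h2
    linarith
  refine ⟨by rw [hrw]; linarith, ?_⟩
  rw [hrw]
  constructor
  · intro h
    by_contra hne
    have hane : 2 * a / (a + b) ≠ 1 := by
      intro hh; apply hne; field_simp at hh; linarith
    have hlt := log_gt_one_sub_inv hxa hane
    rw [hia] at hlt
    have s1 := mul_lt_mul_of_pos_left hlt hap
    rw [mul_sub, mul_one, ea] at s1
    linarith
  · intro h
    subst h
    have h1 : 2 * a / (a + a) = 1 := by field_simp; ring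
    rw [h1]; simp

lemma key (a b : ℝ) (ha : 0 ≤ a) (hb : 0 ≤ b) :
    0 ≤ a * Real.log (a / (a + b)) + b * Real.log (b / (a + b)) + (a + b) * Real.log 2 ∧
    (a * Real.log (a / (a + b)) + b * Real.log (b / (a + b)) + (a + b) * Real.log 2 = 0 ↔
      a = b) := by
  have hlog2 : (0:ℝ) < Real.log 2 := Real.log_pos (by norm_num)
  rcases eq_or_lt_of_le ha with ha0 | hap
  · rcases eq_or_lt_of_le hb with hb0 | hbp
    · simp [← ha0, ← hb0]
    · rw [← ha0]
      have he : 0 * Real.log (0 / (0 + b)) + b * Real.log (b / (0 + b)) + (0 + b) * Real.log 2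
          = b * Real.log 2 := by
        rw [zero_add, div_self hbp.ne', Real.log_one]; ring
      rw [he]
      exact ⟨by positivity, fun h => absurd h (mul_pos (by assumption) hlog2).ne',
        fun h => absurd h.symm hbp.ne'⟩
  · rcases eq_or_lt_of_le hb with hb0 | hbp
    · rw [← hb0]
      have he : a * Real.log (a / (a + 0)) + 0 * Real.log (0 / (a + 0)) + (a + 0) * Real.log 2
          = a * Real.log 2 := by
        rw [add_zero, div_self hap.ne', Real.log_one]; ring
      rw [he]
      exact ⟨by positivity, fun h => absurd h (mul_pos (by assumption) hlog2).ne', fun h => absurd h hap.ne'⟩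
    · exact key_pos a b hap hbp

theorem gan_value_jsd_identity {α : Type*} [MeasurableSpace α] (μ : Measure α)
    [SigmaFinite μ] (p q : α → ℝ)
    (hpm : Measurable p) (hqm : Measurable q)
    (hp0 : ∀ x, 0 ≤ p x) (hq0 : ∀ x, 0 ≤ q x)
    (hp1 : ∫ x, p x ∂μ = 1) (hq1 : ∫ x, q x ∂μ = 1)
    (hpi : Integrable p μ) (hqi : Integrable q μ)
    (hip : Integrable (fun x => p x * Real.log (p x / (p x + q x))) μ)
    (hiq : Integrable (fun x => q x * Real.log (q x / (p x + q x))) μ) :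
    (∫ x, p x * Real.log (p x / (p x + q x)) ∂μ) +
      (∫ x, q x * Real.log (q x / (p x + q x)) ∂μ)
      = -Real.log 4 + 2 * JSD μ p q ∧
    -Real.log 4 ≤ (∫ x, p x * Real.log (p x / (p x + q x)) ∂μ) +
      (∫ x, q x * Real.log (q x / (p x + q x)) ∂μ) ∧
    ((∫ x, p x * Real.log (p x / (p x + q x)) ∂μ) +
      (∫ x, q x * Real.log (q x / (p x + q x)) ∂μ) = -Real.log 4 ↔ p =ᵐ[μ] q) := by
  have log4 : Real.log 4 = 2 * Real.log 2 := by
    rw [show (4:ℝ) = 2^2 by norm_num, Real.log_pow]; push_cast; ring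
  set g : α → ℝ := fun x =>
    p x * Real.log (p x / (p x + q x)) + q x * Real.log (q x / (p x + q x)) +
      (p x + q x) * Real.log 2 with hg_def
  have hg_int : Integrable g μ := (hip.add hiq).add ((hpi.add hqi).mul_const (Real.log 2))
  have hg_eq : ∫ x, g x ∂μ =
      (∫ x, p x * Real.log (p x / (p x + q x)) ∂μ) +
      (∫ x, q x * Real.log (q x / (p x + q x)) ∂μ) + 2 * Real.log 2 := by
    have hi12 : Integrable (fun x => p x * Real.log (p x / (p x + q x)) +
        q x * Real.log (q x / (p x + q x))) μ := hip.add hiq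
    have hi3 : Integrable (fun x => (p x + q x) * Real.log 2) μ :=
      (hpi.add hqi).mul_const _
    have hipq : Integrable (fun x => p x + q x) μ := hpi.add hqi
    calc ∫ x, g x ∂μ
        = ∫ x, ((p x * Real.log (p x / (p x + q x)) + q x * Real.log (q x / (p x + q x))) +
            (p x + q x) * Real.log 2) ∂μ := rfl
      _ = (∫ x, (p x * Real.log (p x / (p x + q x)) + q x * Real.log (q x / (p x + q x))) ∂μ) +
            ∫ x, (p x + q x) * Real.log 2 ∂μ := integral_add hi12 hi3
      _ = ((∫ x, p x * Real.log (p x / (p x + q x)) ∂μ) +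
            (∫ x, q x * Real.log (q x / (p x + q x)) ∂μ)) +
            (∫ x, (p x + q x) ∂μ) * Real.log 2 := by
          rw [integral_add hip hiq, integral_mul_const]
      _ = _ := by rw [integral_add hpi hqi, hp1, hq1]; ring
  have hg0 : ∀ x, 0 ≤ g x := fun x => (key (p x) (q x) (hp0 x) (hq0 x)).1
  have hJp : ∫ x, p x * Real.log (p x / ((p x + q x) / 2)) ∂μ =
      (∫ x, p x * Real.log (p x / (p x + q x)) ∂μ) + Real.log 2 := by
    have heq : ∀ x, p x * Real.log (p x / ((p x + q x) / 2)) =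
        p x * Real.log (p x / (p x + q x)) + p x * Real.log 2 := fun x =>
      split_log (p x) (q x) (hp0 x) (hq0 x)
    rw [integral_congr_ae (Filter.Eventually.of_forall heq),
      integral_add hip (hpi.mul_const (Real.log 2)), integral_mul_const, hp1, one_mul]
  have hJq : ∫ x, q x * Real.log (q x / ((p x + q x) / 2)) ∂μ =
      (∫ x, q x * Real.log (q x / (p x + q x)) ∂μ) + Real.log 2 := by
    have heq : ∀ x, q x * Real.log (q x / ((p x + q x) / 2)) =
        q x * Real.log (q x / (p x + q x)) + q x * Real.log 2 := by
      intro x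
      have h := split_log (q x) (p x) (hq0 x) (hp0 x)
      rwa [add_comm (q x) (p x)] at h
    rw [integral_congr_ae (Filter.Eventually.of_forall heq),
      integral_add hiq (hqi.mul_const (Real.log 2)), integral_mul_const, hq1, one_mul]
  have hnn : 0 ≤ ∫ x, g x ∂μ := integral_nonneg hg0
  refine ⟨?_, ?_, ?_, ?_⟩
  · unfold JSD
    rw [hJp, hJq, log4]
    ring
  · rw [log4]; linarith [hg_eq ▸ hnn]
  · intro h
    have hz : ∫ x, g x ∂μ = 0 := by rw [log4] at h; rw [hg_eq]; linarith
    have hae := (integral_eq_zero_iff_of_nonneg hg0 hg_int).mp hz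
    filter_upwards [hae] with x hx
    exact ((key (p x) (q x) (hp0 x) (hq0 x)).2).mp hx
  · intro h
    have hgz : g =ᵐ[μ] 0 := by
      filter_upwards [h] with x hx
      show g x = 0
      exact ((key (p x) (q x) (hp0 x) (hq0 x)).2).mpr hx
    have hz : ∫ x, g x ∂μ = 0 := by
      rw [integral_congr_ae hgz]; simp
    rw [log4]
    rw [hg_eq] at hz
    linarith
end

section
/- The value of the GAN minimax game, C(G) = ∫ p·log D* + ∫ q·log(1 - D*) with the optimal discriminator D* = p/(p+q), attains its global minimum -log 4 over all generator densities q exactly when q = p almost everywhere. -/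
open MeasureTheory

private lemma aux_lb {a s : ℝ} (ha : 0 ≤ a) (hs : 0 < s) :
    a - s / 2 ≤ a * Real.log (2 * a / s) := by
  rcases ha.eq_or_lt with h | h
  · simp [← h]
    positivity
  · have hx : 0 < 2 * a / s := by positivity
    have h1 : 1 - (2 * a / s)⁻¹ ≤ Real.log (2 * a / s) :=
      Real.one_sub_inv_le_log_of_pos hx
    have h2 : a * (1 - (2 * a / s)⁻¹) ≤ a * Real.log (2 * a / s) :=
      mul_le_mul_of_nonneg_left h1 h.le
    have h3 : a * (1 - (2 * a / s)⁻¹) = a - s / 2 := by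
      field_simp
    linarith

private lemma aux_lb_strict {a s : ℝ} (ha : 0 ≤ a) (hs : 0 < s) (hne : a ≠ s / 2) :
    a - s / 2 < a * Real.log (2 * a / s) := by
  rcases ha.eq_or_lt with h | h
  · rw [← h]; simp; positivity
  · have hx : 0 < 2 * a / s := by positivity
    have hx1 : (2 * a / s)⁻¹ ≠ 1 := by
      intro hc
      apply hne
      have : 2 * a / s = 1 := by
        field_simp at hc ⊢; linarith
      field_simp at this
      linarith
    have h1 : Real.log ((2 * a / s)⁻¹) < (2 * a / s)⁻¹ - 1 :=
      Real.log_lt_sub_one_of_pos (inv_pos.mpr hx) hx1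
    rw [Real.log_inv] at h1
    have h2 : a * (1 - (2 * a / s)⁻¹) < a * Real.log (2 * a / s) := by
      have := mul_lt_mul_of_pos_left (by linarith : 1 - (2 * a / s)⁻¹ < Real.log (2 * a / s)) h
      linarith
    have h3 : a * (1 - (2 * a / s)⁻¹) = a - s / 2 := by
      field_simp
    linarith

private lemma aux_key {a b : ℝ} (ha : 0 ≤ a) (hb : 0 ≤ b) :
    0 ≤ a * Real.log (2 * a / (a + b)) + b * Real.log (2 * b / (a + b)) ∧
    (a * Real.log (2 * a / (a + b)) + b * Real.log (2 * b / (a + b)) = 0 ↔ a = b) := by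
  rcases eq_or_lt_of_le (by linarith : (0:ℝ) ≤ a + b) with hs | hs
  · have ha0 : a = 0 := by linarith
    have hb0 : b = 0 := by linarith
    simp [ha0, hb0]
  constructor
  · have h1 := aux_lb ha hs
    have h2 := aux_lb hb hs
    linarith
  constructor
  · intro h0
    by_contra hne
    have hane : a ≠ (a + b) / 2 := by intro hc; apply hne; linarith
    have hbne : b ≠ (a + b) / 2 := by intro hc; apply hne; linarith
    have h1 := aux_lb_strict ha hs hane
    have h2 := aux_lb_strict hb hs hbne
    linarith
  · intro h
    subst h
    have ha' : 0 < a := by linarith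
    have : 2 * a / (a + a) = 1 := by field_simp; ring
    rw [this]
    simp

private lemma aux_split {a s : ℝ} (ha : 0 ≤ a) (has : a ≤ s) :
    a * Real.log (2 * a / s) = Real.log 2 * a + a * Real.log (a / s) := by
  rcases ha.eq_or_lt with h | h
  · simp [← h]
  · have hs : 0 < s := lt_of_lt_of_le h has
    rw [show 2 * a / s = 2 * (a / s) by ring,
      Real.log_mul two_ne_zero (by positivity : a / s ≠ 0)]
    ring

theorem gan_minimax_value_min {α : Type*} [MeasurableSpace α] (μ : Measure α)
    [SigmaFinite μ] (p q : α → ℝ)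
    (hpm : Measurable p) (hqm : Measurable q)
    (hp0 : ∀ x, 0 ≤ p x) (hq0 : ∀ x, 0 ≤ q x)
    (hp1 : ∫ x, p x ∂μ = 1) (hq1 : ∫ x, q x ∂μ = 1)
    (hpi : Integrable p μ) (hqi : Integrable q μ)
    (hip : Integrable (fun x => p x * Real.log (p x / (p x + q x))) μ)
    (hiq : Integrable (fun x => q x * Real.log (q x / (p x + q x))) μ) :
    -Real.log 4 ≤ (∫ x, p x * Real.log (p x / (p x + q x)) ∂μ) +
      (∫ x, q x * Real.log (1 - p x / (p x + q x)) ∂μ) ∧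
    ((∫ x, p x * Real.log (p x / (p x + q x)) ∂μ) +
      (∫ x, q x * Real.log (1 - p x / (p x + q x)) ∂μ) = -Real.log 4 ↔ q =ᵐ[μ] p) := by
  -- rewrite second integrand
  have hrw : (fun x => q x * Real.log (1 - p x / (p x + q x)))
      = fun x => q x * Real.log (q x / (p x + q x)) := by
    funext x
    rcases (hq0 x).eq_or_lt with h | h
    · simp [← h]
    · have hs : 0 < p x + q x := by linarith [hp0 x]
      have heq : 1 - p x / (p x + q x) = q x / (p x + q x) := by
        field_simp
        ring
      rw [heq]
  rw [hrw]
  set g : α → ℝ := fun x =>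
    p x * Real.log (2 * p x / (p x + q x)) + q x * Real.log (2 * q x / (p x + q x)) with hg
  have hsplit : g = fun x =>
      (Real.log 2 * p x + p x * Real.log (p x / (p x + q x)))
      + (Real.log 2 * q x + q x * Real.log (q x / (p x + q x))) := by
    funext x
    rw [hg]
    dsimp only
    rw [aux_split (hp0 x) (by linarith [hq0 x]), aux_split (hq0 x) (by linarith [hp0 x])]
  have hgi : Integrable g μ := by
    rw [hsplit]
    exact ((hpi.const_mul _).add hip).add ((hqi.const_mul _).add hiq)
  have hlog4 : Real.log 4 = 2 * Real.log 2 := by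
    rw [show (4:ℝ) = 2 ^ 2 by norm_num, Real.log_pow]
    push_cast; ring
  have hgint : ∫ x, g x ∂μ = Real.log 4 +
      ((∫ x, p x * Real.log (p x / (p x + q x)) ∂μ)
        + (∫ x, q x * Real.log (q x / (p x + q x)) ∂μ)) := by
    have ha : Integrable (fun x => Real.log 2 * p x
        + p x * Real.log (p x / (p x + q x))) μ := (hpi.const_mul _).add hip
    have hb : Integrable (fun x => Real.log 2 * q x
        + q x * Real.log (q x / (p x + q x))) μ := (hqi.const_mul _).add hiq
    rw [hsplit]
    rw [integral_add ha hb,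
      integral_add (hpi.const_mul _) hip, integral_add (hqi.const_mul _) hiq,
      integral_const_mul, integral_const_mul, hp1, hq1, hlog4]
    ring
  have hgnn : ∀ x, 0 ≤ g x := fun x => (aux_key (hp0 x) (hq0 x)).1
  have hgzero : ∀ x, g x = 0 ↔ p x = q x := fun x => (aux_key (hp0 x) (hq0 x)).2
  constructor
  · have : 0 ≤ ∫ x, g x ∂μ := integral_nonneg hgnn
    linarith [hgint ▸ this]
  · constructor
    · intro h
      have hz : ∫ x, g x ∂μ = 0 := by rw [hgint]; linarith
      have := (integral_eq_zero_iff_of_nonneg hgnn hgi).mp hz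
      filter_upwards [this] with x hx
      exact ((hgzero x).mp hx).symm
    · intro h
      have hz : ∫ x, g x ∂μ = 0 := by
        rw [(integral_eq_zero_iff_of_nonneg hgnn hgi)]
        filter_upwards [h] with x hx
        exact (hgzero x).mpr hx.symm
      rw [hgint] at hz
      linarith
end
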